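/- For every integer n ≥ 1 and every real number x, Σ_{k=1}^{n} (1/n)·binom(n,k)·binom(n,k−1)·x^{k−1} = Σ_{k=0}^{⌊(n−1)/2⌋} Cat_k·binom(n−1,2k)·x^k·(1+x)^{n−2k−1}. -/

import Mathlib

/-- The Catalan number `Cat k = (1/(k+1)) * binom(2k, k)`, as a real number. -/
noncomputable def catalanR (k : ℕ) : ℝ := (1 / ((k : ℝ) + 1)) * (Nat.choose (2 * k) k : ℝ)

open Finset

-- chain identity
lemma CH (n a b : ℕ) : n.choose a * (n-a).choose b = n.choose (a+b) * (a+b).choose a := by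
  by_cases h : a + b ≤ n
  · have := Nat.choose_mul (n := n) (Nat.le_add_right a b)
    simpa [Nat.add_sub_cancel_left] using this.symm
  · push_neg at h
    rw [Nat.choose_eq_zero_of_lt h, Nat.zero_mul]
    by_cases ha : a ≤ n
    · have : n - a < b := by omega
      rw [Nat.choose_eq_zero_of_lt this, Nat.mul_zero]
    · push_neg at ha
      rw [Nat.choose_eq_zero_of_lt ha, Nat.zero_mul]

lemma SW (n a b : ℕ) : n.choose a * (n-a).choose b = n.choose b * (n-b).choose a := by
  rw [CH, CH n b a, Nat.add_comm b a, Nat.choose_symm_add]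

lemma V (a b c : ℕ) : ∑ k ∈ range (c+1), a.choose k * b.choose (c-k) = (a+b).choose c := by
  rw [Nat.add_choose_eq, Finset.Nat.sum_antidiagonal_eq_sum_range_succ (fun i j => a.choose i * b.choose j)]

lemma T1 {N m k : ℕ} (hk : k ≤ m) (hm : m ≤ N) :
    N.choose (2*k) * ((2*k).choose k * (N-2*k).choose (m-k))
      = N.choose m * ((N-m).choose k * m.choose (m-k)) := by
  have h1 : N.choose k * (N-k).choose k = N.choose (2*k) * (2*k).choose k := by
    have := CH N k k; rw [two_mul]; omega
  have h2 : (N-k).choose k * (N-2*k).choose (m-k) = (N-k).choose m * m.choose k := by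
    have := CH (N-k) k (m-k)
    rw [Nat.sub_sub] at this
    rw [show k + (m-k) = m by omega] at this
    rw [show k + k = 2*k by ring] at this
    exact this
  have h3 : N.choose k * (N-k).choose m = N.choose m * (N-m).choose k := SW N k m
  have h4 : m.choose k = m.choose (m-k) := (Nat.choose_symm hk).symm
  zify at h1 h2 h3 h4 ⊢
  linear_combination (-((N-2*k).choose (m-k) : ℤ))*h1 + (N.choose k : ℤ)*h2
    + (m.choose k : ℤ)*h3 + (N.choose m : ℤ)*((N-m).choose k : ℤ)*h4

lemma L1 {N m : ℕ} (hm : m ≤ N) :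
    ∑ k ∈ range (m+1), N.choose (2*k) * ((2*k).choose k * (N-2*k).choose (m-k))
      = N.choose m * N.choose m := by
  rw [Finset.sum_congr rfl (fun k hk => T1 (Nat.lt_succ_iff.mp (Finset.mem_range.mp hk)) hm),
    ← Finset.mul_sum, V (N-m) m m, Nat.sub_add_cancel hm]

lemma T2 {N m j : ℕ} (hj : j < m) :
    N.choose (2*(j+1)) * ((2*(j+1)).choose (j+1+1) * (N-2*(j+1)).choose (m-(j+1)))
      = N.choose (m-1) * ((N-(m-1)).choose (j+2) * (m-1).choose j) := by
  have h1 := CH N (j+2) j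
  rw [show j+2+j = 2*(j+1) by ring] at h1
  have h2 := CH (N-(j+2)) j (m-1-j)
  rw [Nat.sub_sub, show j+2+j = 2*(j+1) by ring, show j + (m-1-j) = m-1 by omega] at h2
  have h3 := SW N (j+2) (m-1)
  rw [show m-(j+1) = m-1-j by omega, show j+1+1 = j+2 by ring]
  zify at h1 h2 h3 ⊢
  linear_combination (-(((N-2*(j+1)).choose (m-1-j)) : ℤ))*h1 + (N.choose (j+2) : ℤ)*h2
    + ((m-1).choose j : ℤ)*h3

lemma L2 {N m : ℕ} (h1m : 1 ≤ m) (hm : m ≤ N) :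
    ∑ k ∈ range (m+1), N.choose (2*k) * ((2*k).choose (k+1) * (N-2*k).choose (m-k))
      = N.choose (m+1) * N.choose (m-1) := by
  have hV := V (N-(m-1)) (m-1) (m+1)
  rw [Nat.sub_add_cancel (le_trans (Nat.sub_le m 1) hm)] at hV
  rw [Finset.sum_range_succ'] at hV
  rw [Finset.sum_range_succ'] at hV
  have e0 : (N-(m-1)).choose 0 * (m-1).choose (m+1-0) = 0 := by
    rw [Nat.choose_eq_zero_of_lt (show m-1 < m+1-0 by omega), Nat.mul_zero]
  have e1 : (N-(m-1)).choose (0+1) * (m-1).choose (m+1-(0+1)) = 0 := by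
    rw [Nat.choose_eq_zero_of_lt (show m-1 < m+1-(0+1) by omega), Nat.mul_zero]
  rw [e0, e1] at hV
  simp only [Nat.add_zero, Nat.zero_add] at hV
  rw [Finset.sum_range_succ']
  have z0 : N.choose (2*0) * ((2*0).choose (0+1) * (N-2*0).choose (m-0)) = 0 := by
    norm_num
  rw [z0, Nat.add_zero]
  rw [Finset.sum_congr rfl (fun j hj => T2 (Finset.mem_range.mp hj)), ← Finset.mul_sum]
  rw [Nat.mul_comm (N.choose (m+1))]
  congr 1
  rw [← hV]
  apply Finset.sum_congr rfl
  intro j hj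
  have hjm : j < m := Finset.mem_range.mp hj
  rw [show m+1-(j+1+1) = m-1-j by omega, Nat.choose_symm (show j ≤ m-1 by omega)]

lemma cat1 (k : ℕ) : (2*k).choose k = (k+1) * catalan k := by
  rw [succ_mul_catalan_eq_centralBinom, Nat.centralBinom_eq_two_mul_choose]

lemma cat2 (k : ℕ) : (2*k).choose (k+1) = k * catalan k := by
  have h := Nat.choose_succ_right_eq (2*k) k
  rw [cat1, show 2*k - k = k by omega] at h
  have : (2*k).choose (k+1) * (k+1) = k * catalan k * (k+1) := by rw [h]; ring
  exact Nat.eq_of_mul_eq_mul_right (by omega) this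

lemma cat_real (k : ℕ) :
    (catalan k : ℝ) = ((2*k).choose k : ℝ) - ((2*k).choose (k+1) : ℝ) := by
  rw [cat1, cat2]; push_cast; ring

lemma FIN {N m : ℕ} (h1m : 1 ≤ m) (hm : m ≤ N) :
    (N.choose m : ℝ)^2 - (N.choose (m+1) : ℝ) * (N.choose (m-1) : ℝ)
      = (1/((N:ℝ)+1)) * ((N+1).choose (m+1) : ℝ) * ((N+1).choose m : ℝ) := by
  set a := (N.choose (m-1) : ℝ) with ha_def
  set b := (N.choose m : ℝ) with hb_def
  set c := (N.choose (m+1) : ℝ) with hc_def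
  have p1 : ((N+1).choose (m+1) : ℝ) = b + c := by
    rw [Nat.choose_succ_succ]; push_cast; ring
  have p2 : ((N+1).choose m : ℝ) = a + b := by
    rw [show (N+1).choose m = N.choose (m-1) + N.choose m by
      have h := Nat.choose_succ_succ N (m-1)
      rw [show (m-1).succ = m by omega] at h
      simpa using h]
    push_cast; ring
  have rel1 : c * ((m:ℝ)+1) = b * ((N:ℝ)-m) := by
    have h := Nat.choose_succ_right_eq N m
    have := congrArg (fun t : ℕ => (t:ℝ)) h
    push_cast [Nat.cast_sub hm] at this
    rw [hb_def, hc_def]; linarith [this]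
  have rel2 : b * (m:ℝ) = a * ((N:ℝ)-m+1) := by
    have h := Nat.choose_succ_right_eq N (m-1)
    rw [show m-1+1 = m by omega] at h
    have := congrArg (fun t : ℕ => (t:ℝ)) h
    have hsub : ((N - (m-1) : ℕ) : ℝ) = (N:ℝ) - m + 1 := by
      rw [Nat.cast_sub (by omega)]; push_cast [Nat.cast_sub h1m]; ring
    push_cast [hsub] at this
    exact this
  have hm1 : ((m:ℝ)+1) ≠ 0 := by positivity
  have hN1 : ((N:ℝ)+1) ≠ 0 := by positivity
  have hNm : ((N:ℝ)-m+1) ≠ 0 := by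
    have : (m:ℝ) ≤ (N:ℝ) := by exact_mod_cast hm
    nlinarith
  have hc : c = b*((N:ℝ)-m)/((m:ℝ)+1) := by field_simp; linarith [rel1]
  have ha : a = b*(m:ℝ)/((N:ℝ)-m+1) := by field_simp; linarith [rel2]
  rw [p1, p2, hc, ha]
  field_simp
  ring

lemma KEY {N m : ℕ} (hm : m ≤ N) :
    ∑ k ∈ range (m+1),
        (catalan k : ℝ) * (N.choose (2*k) : ℝ) * ((N-2*k).choose (m-k) : ℝ)
      = (1/((N:ℝ)+1)) * ((N+1).choose (m+1) : ℝ) * ((N+1).choose m : ℝ) := by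
  rcases Nat.eq_zero_or_pos m with rfl | h1m
  · simp [catalan_zero, Nat.choose_one_right]
    field_simp
  · have hsplit : ∀ k ∈ range (m+1),
        (catalan k : ℝ) * (N.choose (2*k) : ℝ) * ((N-2*k).choose (m-k) : ℝ)
          = (N.choose (2*k) * ((2*k).choose k * (N-2*k).choose (m-k)) : ℕ)
            - (N.choose (2*k) * ((2*k).choose (k+1) * (N-2*k).choose (m-k)) : ℕ) := by
      intro k _
      rw [cat_real]
      push_cast
      ring
    rw [Finset.sum_congr rfl hsplit, Finset.sum_sub_distrib]
    rw [← Nat.cast_sum, ← Nat.cast_sum, L1 hm, L2 h1m hm]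
    rw [← FIN h1m hm]
    push_cast
    ring

open Polynomial in
lemma POLY (N : ℕ) :
    (∑ j ∈ range (N+1),
        C ((1/((N:ℝ)+1)) * ((N+1).choose (j+1) : ℝ) * ((N+1).choose j : ℝ)) * X ^ j : ℝ[X])
      = ∑ k ∈ range (N/2+1),
          C ((catalan k : ℝ) * (N.choose (2*k) : ℝ)) * ((X+1) ^ (N-2*k) * X ^ k) := by
  ext m
  have hL : (∑ j ∈ range (N+1),
      C ((1/((N:ℝ)+1)) * ((N+1).choose (j+1) : ℝ) * ((N+1).choose j : ℝ)) * X ^ j : ℝ[X]).coeff m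
      = if m < N+1 then (1/((N:ℝ)+1)) * ((N+1).choose (m+1) : ℝ) * ((N+1).choose m : ℝ) else 0 := by
    rw [finset_sum_coeff]
    simp only [coeff_C_mul, coeff_X_pow, mul_ite, mul_one, mul_zero, Finset.sum_ite_eq,
      Finset.mem_range]
  have hR : (∑ k ∈ range (N/2+1),
      C ((catalan k : ℝ) * (N.choose (2*k) : ℝ)) * ((X+1) ^ (N-2*k) * X ^ k) : ℝ[X]).coeff m
      = ∑ k ∈ range (N/2+1), (catalan k : ℝ) * (N.choose (2*k) : ℝ)
          * (if k ≤ m then ((N-2*k).choose (m-k) : ℝ) else 0) := by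
    rw [finset_sum_coeff]
    apply Finset.sum_congr rfl
    intro k _
    rw [coeff_C_mul, coeff_mul_X_pow']
    by_cases hk : k ≤ m
    · rw [if_pos hk, if_pos hk, coeff_X_add_one_pow]
    · rw [if_neg hk, if_neg hk]
  rw [hL, hR]
  by_cases hm : m ≤ N
  · rw [if_pos (by omega)]
    have step1 : ∑ k ∈ range (N/2+1),
        (catalan k : ℝ) * (N.choose (2*k) : ℝ) * (if k ≤ m then ((N-2*k).choose (m-k) : ℝ) else 0)
        = ∑ k ∈ range (N+1),
        (catalan k : ℝ) * (N.choose (2*k) : ℝ) * (if k ≤ m then ((N-2*k).choose (m-k) : ℝ) else 0) := by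
      apply Finset.sum_subset (Finset.range_subset_range.2 (by omega))
      intro k hk hnk
      simp only [Finset.mem_range] at hk hnk
      rw [Nat.choose_eq_zero_of_lt (show N < 2*k by omega)]
      push_cast; ring
    have step2 : ∑ k ∈ range (N+1),
        (catalan k : ℝ) * (N.choose (2*k) : ℝ) * (if k ≤ m then ((N-2*k).choose (m-k) : ℝ) else 0)
        = ∑ k ∈ range (m+1),
        (catalan k : ℝ) * (N.choose (2*k) : ℝ) * ((N-2*k).choose (m-k) : ℝ) := by
      rw [← Finset.sum_subset (Finset.range_subset_range.2 (show m+1 ≤ N+1 by omega))]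
      · apply Finset.sum_congr rfl
        intro k hk
        rw [if_pos (by simp only [Finset.mem_range] at hk; omega)]
      · intro k hk hnk
        simp only [Finset.mem_range] at hk hnk
        rw [if_neg (by omega), mul_zero]
    rw [step1, step2, KEY hm]
  · rw [if_neg (by omega)]
    symm
    apply Finset.sum_eq_zero
    intro k hk
    simp only [Finset.mem_range] at hk
    rw [if_pos (by omega), Nat.choose_eq_zero_of_lt (show N-2*k < m-k by omega)]
    push_cast; ring


lemma catR (k : ℕ) : catalanR k = (catalan k : ℝ) := by
  have hk : ((k:ℝ)+1) ≠ 0 := by positivity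
  unfold catalanR
  rw [cat1]
  push_cast
  field_simp

theorem stmt1 (n : ℕ) (hn : 1 ≤ n) (x : ℝ) :
    ∑ k ∈ Finset.Icc 1 n,
        (1 / (n : ℝ)) * (Nat.choose n k : ℝ) * (Nat.choose n (k - 1) : ℝ) * x ^ (k - 1)
      = ∑ k ∈ Finset.range ((n - 1) / 2 + 1),
          catalanR k * (Nat.choose (n - 1) (2 * k) : ℝ) * x ^ k * (1 + x) ^ (n - 2 * k - 1) := by
  obtain ⟨N, rfl⟩ : ∃ N, n = N + 1 := ⟨n-1, by omega⟩
  have hEval := congrArg (Polynomial.eval x) (POLY N)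
  simp only [Polynomial.eval_finset_sum, Polynomial.eval_mul, Polynomial.eval_pow,
    Polynomial.eval_C, Polynomial.eval_X, Polynomial.eval_add, Polynomial.eval_one] at hEval
  have hLHS : ∑ k ∈ Finset.Icc 1 (N+1),
      (1 / (((N+1:ℕ)) : ℝ)) * (Nat.choose (N+1) k : ℝ) * (Nat.choose (N+1) (k - 1) : ℝ) * x ^ (k - 1)
      = ∑ j ∈ range (N+1), 1/((N:ℝ)+1) * ((N+1).choose (j+1) : ℝ) * ((N+1).choose j : ℝ) * x^j := by
    have hmap : Finset.Icc 1 (N+1)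
        = Finset.map ⟨fun j => j+1, add_left_injective 1⟩ (range (N+1)) := by
      ext a
      simp only [Finset.mem_Icc, Finset.mem_map, Finset.mem_range, Function.Embedding.coeFn_mk]
      constructor
      · rintro ⟨h1, h2⟩; exact ⟨a-1, by omega, by omega⟩
      · rintro ⟨b, hb, rfl⟩; omega
    rw [hmap, Finset.sum_map]
    apply Finset.sum_congr rfl
    intro j _
    simp only [Function.Embedding.coeFn_mk, Nat.add_sub_cancel]
    push_cast
    ring
  have hRHS : ∑ k ∈ Finset.range ((N+1-1)/2+1),
      catalanR k * (Nat.choose (N+1-1) (2*k) : ℝ) * x^k * (1+x)^(N+1-2*k-1)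
      = ∑ k ∈ range (N/2+1), ((catalan k : ℝ) * (N.choose (2*k) : ℝ)) * ((x+1)^(N-2*k) * x^k) := by
    apply Finset.sum_congr
    · congr 1
    · intro k _
      rw [catR, show N+1-1 = N by omega, show N+1-2*k-1 = N-2*k by omega, add_comm (1:ℝ) x]
      ring
  rw [hLHS, hRHS, hEval]
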